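/- If S and R are two minimal generating sets for the same G-transfer system T, then there is a bijection f : S → R which, for each n, restricts to a bijection between the elements of S whose source subgroup has total prime exponent exactly n and the corresponding elements of R. -/

import Mathlib

/-- Conjugate of a subgroup: `H^g`. -/
def conjSub {G : Type*} [Group G] (g : G) (H : Subgroup G) : Subgroup G :=
  H.map (MulAut.conj g).toMonoidHom

/-- A `G`-transfer system: a set of pairs `(K, H)` of subgroups with `K ≤ H`, containing all
identity pairs and closed under composition, conjugation, and restriction. -/
def IsTransferSystem {G : Type*} [Group G] (T : Set (Subgroup G × Subgroup G)) : Prop :=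
  (∀ p ∈ T, p.1 ≤ p.2) ∧
  (∀ H : Subgroup G, (H, H) ∈ T) ∧
  (∀ L K H : Subgroup G, (L, K) ∈ T → (K, H) ∈ T → (L, H) ∈ T) ∧
  (∀ K H : Subgroup G, (K, H) ∈ T → ∀ g : G, (conjSub g K, conjSub g H) ∈ T) ∧
  (∀ K H : Subgroup G, (K, H) ∈ T → ∀ L : Subgroup G, L ≤ H → (K ⊓ L, L) ∈ T)

/-- Rubin's closure: the smallest transfer system containing `S`. -/
def tsGen {G : Type*} [Group G] (S : Set (Subgroup G × Subgroup G)) :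
    Set (Subgroup G × Subgroup G) :=
  ⋂₀ {T | IsTransferSystem T ∧ S ⊆ T}

/-- `S` is a minimal generating set (of non-identity intervals) for the transfer system `T`. -/
def IsMinGenSet {G : Type*} [Group G] (S T : Set (Subgroup G × Subgroup G)) : Prop :=
  S ⊆ T ∧ (∀ p ∈ S, p.1 ≠ p.2) ∧ tsGen S = T ∧ ∀ s ∈ S, tsGen (S \ {s}) ⊂ T

/-- Total exponent (number of prime factors with multiplicity) of `n`. -/
def bigOmega (n : ℕ) : ℕ := n.primeFactorsList.length

/-! ### Auxiliary material -/

section Conj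

variable {G : Type*} [Group G]

theorem conjSub_one (K : Subgroup G) : conjSub (1 : G) K = K := by
  ext x
  simp [conjSub, Subgroup.mem_map]

theorem conjSub_conjSub (g h : G) (K : Subgroup G) :
    conjSub g (conjSub h K) = conjSub (g * h) K := by
  unfold conjSub
  rw [Subgroup.map_map]
  congr 1
  ext x
  simp [MulAut.conj_apply, mul_assoc]

theorem conjSub_mono (g : G) {K L : Subgroup G} (h : K ≤ L) : conjSub g K ≤ conjSub g L :=
  Subgroup.map_mono h

theorem conjSub_inf (g : G) (K L : Subgroup G) :
    conjSub g (K ⊓ L) = conjSub g K ⊓ conjSub g L :=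
  Subgroup.map_inf K L _ (MulAut.conj g).injective

theorem card_conjSub (g : G) (K : Subgroup G) : Nat.card (conjSub g K) = Nat.card K :=
  (Nat.card_congr (K.equivMapOfInjective _ (MulAut.conj g).injective).toEquiv).symm

end Conj

section Weight

theorem bigOmega_lt_of_dvd {a b : ℕ} (hb : b ≠ 0) (h : a ∣ b) (hne : a ≠ b) :
    bigOmega a < bigOmega b := by
  obtain ⟨c, rfl⟩ := h
  have ha : a ≠ 0 := by rintro rfl; simp at hb
  have hc : c ≠ 0 := by rintro rfl; simp at hb
  have hc1 : c ≠ 1 := by rintro rfl; simp at hne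
  have hperm := (Nat.perm_primeFactorsList_mul ha hc).length_eq
  have hnil : c.primeFactorsList ≠ [] := by
    simp only [ne_eq, Nat.primeFactorsList_eq_nil]
    tauto
  have hpos : 0 < c.primeFactorsList.length := List.length_pos_iff.mpr hnil
  unfold bigOmega
  rw [hperm, List.length_append]
  omega

variable {G : Type*} [Group G] [Finite G]

/-- Total prime exponent of the order of a subgroup. -/
noncomputable def wt (K : Subgroup G) : ℕ := bigOmega (Nat.card K)

theorem wt_lt {A B : Subgroup G} (h : A ≤ B) (hne : A ≠ B) : wt A < wt B := by
  have hd : Nat.card A ∣ Nat.card B := Subgroup.card_dvd_of_le h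
  have hb : Nat.card B ≠ 0 := Nat.card_pos.ne'
  have hcne : Nat.card A ≠ Nat.card B := by
    intro hcard
    exact hne (Subgroup.eq_of_le_of_card_ge h hcard.ge)
  exact bigOmega_lt_of_dvd hb hd hcne

theorem wt_mono {A B : Subgroup G} (h : A ≤ B) : wt A ≤ wt B := by
  rcases eq_or_ne A B with rfl | hne
  · exact le_rfl
  · exact (wt_lt h hne).le

theorem eq_of_le_wt {A B : Subgroup G} (h : A ≤ B) (hw : wt B ≤ wt A) : A = B := by
  by_contra hne
  exact absurd hw (wt_lt h hne).not_ge

theorem wt_conjSub (g : G) (K : Subgroup G) : wt (conjSub g K) = wt K := by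
  unfold wt
  rw [card_conjSub]

end Weight

section Chains

variable {G : Type*} [Group G]

/-- An elementary move: restriction of a conjugate of a generator. -/
def Move (Y : Set (Subgroup G × Subgroup G)) (A B : Subgroup G) : Prop :=
  ∃ p ∈ Y, ∃ g : G, A = conjSub g p.1 ⊓ B ∧ B ≤ conjSub g p.2

/-- Chains of elementary moves. -/
def TGen (Y : Set (Subgroup G × Subgroup G)) : Set (Subgroup G × Subgroup G) :=
  {p | Relation.ReflTransGen (Move Y) p.1 p.2}

theorem Move.le {Y : Set (Subgroup G × Subgroup G)} {A B : Subgroup G}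
    (h : Move Y A B) : A ≤ B := by
  obtain ⟨p, -, g, rfl, -⟩ := h
  exact inf_le_right

theorem Move.mono {Y Y' : Set (Subgroup G × Subgroup G)} (hYY : Y ⊆ Y')
    {A B : Subgroup G} (h : Move Y A B) : Move Y' A B := by
  obtain ⟨p, hp, g, h1, h2⟩ := h
  exact ⟨p, hYY hp, g, h1, h2⟩

theorem rtg_le {Y : Set (Subgroup G × Subgroup G)} {A B : Subgroup G}
    (h : Relation.ReflTransGen (Move Y) A B) : A ≤ B := by
  induction h with
  | refl => exact le_rfl
  | tail _ hm ih => exact ih.trans hm.le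

theorem move_mem_ts {T' Y : Set (Subgroup G × Subgroup G)} (hT' : IsTransferSystem T')
    (hY : Y ⊆ T') {A B : Subgroup G} (h : Move Y A B) : (A, B) ∈ T' := by
  obtain ⟨p, hp, g, rfl, hB⟩ := h
  exact hT'.2.2.2.2 _ _ (hT'.2.2.2.1 _ _ (hY hp) g) _ hB

theorem TGen_subset {T' Y : Set (Subgroup G × Subgroup G)} (hT' : IsTransferSystem T')
    (hY : Y ⊆ T') : TGen Y ⊆ T' := by
  rintro ⟨A, B⟩ h
  simp only [TGen, Set.mem_setOf_eq] at h
  induction h with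
  | refl => exact hT'.2.1 A
  | tail _ hm ih => exact hT'.2.2.1 _ _ _ ih (move_mem_ts hT' hY hm)

theorem rtg_conj {Y : Set (Subgroup G × Subgroup G)} {A B : Subgroup G} (g : G)
    (h : Relation.ReflTransGen (Move Y) A B) :
    Relation.ReflTransGen (Move Y) (conjSub g A) (conjSub g B) := by
  induction h with
  | refl => exact .refl
  | tail _ hm ih =>
    refine ih.tail ?_
    obtain ⟨p, hp, k, rfl, hB⟩ := hm
    refine ⟨p, hp, g * k, ?_, ?_⟩
    · rw [conjSub_inf, conjSub_conjSub]
    · calc conjSub g _ ≤ conjSub g (conjSub k p.2) := conjSub_mono g hB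
        _ = conjSub (g * k) p.2 := conjSub_conjSub _ _ _

theorem rtg_restrict {Y : Set (Subgroup G × Subgroup G)} {A B : Subgroup G}
    (h : Relation.ReflTransGen (Move Y) A B) :
    ∀ L ≤ B, Relation.ReflTransGen (Move Y) (A ⊓ L) L := by
  induction h with
  | refl =>
    intro L hL
    rw [inf_eq_right.mpr hL]
  | @tail b c h1 hm ih =>
    intro L hL
    obtain ⟨p, hp, g, hEq, hB2⟩ := hm
    have hmove : Move Y (b ⊓ L) L := by
      refine ⟨p, hp, g, ?_, hL.trans hB2⟩
      rw [hEq, inf_assoc, inf_eq_right.mpr hL]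
    have h2 := ih (b ⊓ L) inf_le_left
    have h3 : A ⊓ (b ⊓ L) = A ⊓ L := by
      rw [← inf_assoc, inf_eq_left.mpr (rtg_le h1)]
    rw [h3] at h2
    exact h2.tail hmove

theorem isTS_TGen (Y : Set (Subgroup G × Subgroup G)) : IsTransferSystem (TGen Y) := by
  refine ⟨?_, ?_, ?_, ?_, ?_⟩
  · rintro ⟨A, B⟩ h
    exact rtg_le h
  · intro H
    exact Relation.ReflTransGen.refl
  · intro L K H h1 h2
    exact Relation.ReflTransGen.trans h1 h2
  · intro K H h g
    exact rtg_conj g h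
  · intro K H h L hL
    exact rtg_restrict h L hL

theorem subset_TGen {Y : Set (Subgroup G × Subgroup G)} (hY : ∀ p ∈ Y, p.1 ≤ p.2) :
    Y ⊆ TGen Y := by
  intro p hp
  refine Relation.ReflTransGen.single ⟨p, hp, 1, ?_, ?_⟩
  · rw [conjSub_one]
    exact (inf_eq_left.mpr (hY p hp)).symm
  · rw [conjSub_one]

theorem TGen_mono {Y Y' : Set (Subgroup G × Subgroup G)} (hYY : Y ⊆ Y') :
    TGen Y ⊆ TGen Y' := fun _ hp =>
  Relation.ReflTransGen.mono (fun _ _ (hm : Move Y _ _) => hm.mono hYY) _ _ hp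

theorem tsGen_eq_TGen {Y : Set (Subgroup G × Subgroup G)} (hY : ∀ p ∈ Y, p.1 ≤ p.2) :
    tsGen Y = TGen Y := by
  apply subset_antisymm
  · exact Set.sInter_subset_of_mem ⟨isTS_TGen Y, subset_TGen hY⟩
  · intro p hp
    exact Set.mem_sInter.mpr fun T' hT' => TGen_subset hT'.1 hT'.2 hp

end Chains

section Level

variable {G : Type*} [Group G] [Finite G]

/-- Generators of weight at least `N`. -/
def sliceW (Y : Set (Subgroup G × Subgroup G)) (N : ℕ) : Set (Subgroup G × Subgroup G) :=
  {p ∈ Y | p.1 ≠ p.2 ∧ N ≤ wt p.1}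

theorem sliceW_subset (Y : Set (Subgroup G × Subgroup G)) (N : ℕ) : sliceW Y N ⊆ Y :=
  fun _ hp => hp.1

theorem rtg_slice {Y : Set (Subgroup G × Subgroup G)} {N : ℕ} {A B : Subgroup G}
    (h : Relation.ReflTransGen (Move Y) A B) :
    N ≤ wt A → Relation.ReflTransGen (Move (sliceW Y N)) A B := by
  induction h using Relation.ReflTransGen.head_induction_on with
  | refl => intro _; exact .refl
  | @head a c hm h1 ih =>
    intro hA
    have hac : a ≤ c := hm.le
    have hc : N ≤ wt c := hA.trans (wt_mono hac)
    by_cases heq : a = c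
    · rw [heq]; exact ih hc
    · obtain ⟨p, hp, g, hEq, hB2⟩ := hm
      have hKne : p.1 ≠ p.2 := by
        rintro h12
        rw [← h12] at hB2
        exact heq (by rw [hEq, inf_eq_right.mpr hB2])
      have hale : a ≤ conjSub g p.1 := hEq ▸ inf_le_left
      have hwp : N ≤ wt p.1 := by
        have := (wt_mono hale).trans (wt_conjSub g p.1).le
        omega
      exact (ih hc).head ⟨p, ⟨hp, hKne, hwp⟩, g, hEq, hB2⟩

/-- The background transfer system generated by the part of `T` of weight `> N`. -/
def PhiN (T : Set (Subgroup G × Subgroup G)) (N : ℕ) : Set (Subgroup G × Subgroup G) :=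
  TGen (sliceW T (N + 1))

/-- Dependence relation: `v` is obtained from a single rigid move of `z` followed by
background moves. -/
def Dre (T : Set (Subgroup G × Subgroup G)) (N : ℕ) (v z : Subgroup G × Subgroup G) : Prop :=
  ∃ g C, v.1 = conjSub g z.1 ∧ v.1 ≤ C ∧ C ≤ conjSub g z.2 ∧ (C, v.2) ∈ PhiN T N

theorem dre_refl {T : Set (Subgroup G × Subgroup G)} (hT : IsTransferSystem T) (N : ℕ)
    {v : Subgroup G × Subgroup G} (hv : v ∈ T) : Dre T N v v := by
  refine ⟨1, v.2, (conjSub_one v.1).symm, hT.1 v hv, ?_, (isTS_TGen _).2.1 v.2⟩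
  rw [conjSub_one]

theorem dre_trans {T : Set (Subgroup G × Subgroup G)} {N : ℕ}
    {v z z' : Subgroup G × Subgroup G} (h1 : Dre T N v z) (h2 : Dre T N z z') :
    Dre T N v z' := by
  obtain ⟨g, C, he, hle, hC, hPhi⟩ := h1
  obtain ⟨g', C', he', hle', hC', hPhi'⟩ := h2
  have hTS := isTS_TGen (sliceW T (N + 1))
  refine ⟨g * g', conjSub g C' ⊓ C, ?_, ?_, ?_, ?_⟩
  · rw [he, he', conjSub_conjSub]
  · refine le_inf ?_ hle
    rw [he]
    exact conjSub_mono g hle'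
  · refine inf_le_left.trans ?_
    rw [← conjSub_conjSub]
    exact conjSub_mono g hC'
  · have ha : (conjSub g C', conjSub g z.2) ∈ PhiN T N := hTS.2.2.2.1 _ _ hPhi' g
    have hb : (conjSub g C' ⊓ C, C) ∈ PhiN T N := hTS.2.2.2.2 _ _ ha C hC
    exact hTS.2.2.1 _ _ _ hb hPhi

end Level

section MinGen

variable {G : Type*} [Group G] [Finite G]
variable {T S : Set (Subgroup G × Subgroup G)}

theorem hSle (hT : IsTransferSystem T) (hS : IsMinGenSet S T) :
    ∀ p ∈ S, p.1 ≤ p.2 := fun p hp => hT.1 p (hS.1 hp)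

theorem TGen_S_eq (hT : IsTransferSystem T) (hS : IsMinGenSet S T) : TGen S = T := by
  rw [← tsGen_eq_TGen (hSle hT hS), hS.2.2.1]

theorem not_mem_TGen_diff (hT : IsTransferSystem T) (hS : IsMinGenSet S T)
    {s : Subgroup G × Subgroup G} (hs : s ∈ S) : s ∉ TGen (S \ {s}) := by
  intro hmem
  have hle' : ∀ p ∈ S \ {s}, p.1 ≤ p.2 := fun p hp => hSle hT hS p hp.1
  have hsub : S ⊆ TGen (S \ {s}) := by
    intro x hx
    by_cases hxs : x = s
    · rw [hxs]; exact hmem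
    · exact subset_TGen hle' ⟨hx, hxs⟩
  have h2 : T ⊆ TGen (S \ {s}) := by
    rw [← hS.2.2.1]
    exact Set.sInter_subset_of_mem ⟨isTS_TGen _, hsub⟩
  have h3 := hS.2.2.2 s hs
  rw [tsGen_eq_TGen hle'] at h3
  exact h3.not_subset h2

theorem Phi_subset_TGen_slice (hT : IsTransferSystem T) (hS : IsMinGenSet S T) (N : ℕ) :
    PhiN T N ⊆ TGen (sliceW S (N + 1)) := by
  apply TGen_subset (isTS_TGen _)
  intro t ht
  have h1 : Relation.ReflTransGen (Move S) t.1 t.2 := by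
    have : t ∈ TGen S := by rw [TGen_S_eq hT hS]; exact ht.1
    exact this
  exact rtg_slice h1 ht.2.2

theorem Phi_subset_diff (hT : IsTransferSystem T) (hS : IsMinGenSet S T)
    {s : Subgroup G × Subgroup G} (hs : s ∈ S) {N : ℕ} (hwt : wt s.1 = N) :
    PhiN T N ⊆ TGen (S \ {s}) := by
  refine (Phi_subset_TGen_slice hT hS N).trans (TGen_mono ?_)
  intro t ht
  refine ⟨ht.1, ?_⟩
  intro hts
  rw [Set.mem_singleton_iff] at hts
  subst hts
  have := ht.2.2
  omega

theorem s_not_in_Phi (hT : IsTransferSystem T) (hS : IsMinGenSet S T)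
    {s : Subgroup G × Subgroup G} (hs : s ∈ S) {N : ℕ} (hwt : wt s.1 = N) :
    s ∉ PhiN T N := fun hmem =>
  not_mem_TGen_diff hT hS hs (Phi_subset_diff hT hS hs hwt hmem)

theorem dre_eq (hT : IsTransferSystem T) (hS : IsMinGenSet S T)
    {s s' : Subgroup G × Subgroup G} (hs : s ∈ S) (hs' : s' ∈ S)
    (hd : Dre T (wt s.1) s s') : s = s' := by
  by_contra hne
  obtain ⟨g, C, he, hle, hC, hPhi⟩ := hd
  have hT0 := isTS_TGen (S \ {s})
  have hs'0 : s' ∈ TGen (S \ {s}) :=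
    subset_TGen (fun p hp => hSle hT hS p hp.1) ⟨hs', fun h => hne ((Set.mem_singleton_iff.mp h) ▸ rfl)⟩
  have h1 : (conjSub g s'.1, conjSub g s'.2) ∈ TGen (S \ {s}) := hT0.2.2.2.1 _ _ hs'0 g
  have h2 : (conjSub g s'.1 ⊓ C, C) ∈ TGen (S \ {s}) := hT0.2.2.2.2 _ _ h1 C hC
  have h3 : conjSub g s'.1 ⊓ C = s.1 := by rw [← he]; exact inf_eq_left.mpr hle
  have h4 : (C, s.2) ∈ TGen (S \ {s}) := Phi_subset_diff hT hS hs rfl hPhi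
  have h5 : (s.1, s.2) ∈ TGen (S \ {s}) := hT0.2.2.1 _ _ _ (h3 ▸ h2) h4
  exact not_mem_TGen_diff hT hS hs h5

theorem rtg_high_phi (hS : IsMinGenSet S T) {N : ℕ} {C B : Subgroup G}
    (h : Relation.ReflTransGen (Move (sliceW S N)) C B) (hC : N + 1 ≤ wt C) :
    (C, B) ∈ PhiN T N := by
  have h2 := rtg_slice h hC
  have hsub : sliceW (sliceW S N) (N + 1) ⊆ sliceW T (N + 1) := by
    intro t ht
    exact ⟨hS.1 ht.1.1, ht.2⟩
  exact Relation.ReflTransGen.mono (fun _ _ (hm : Move (sliceW (sliceW S N) (N + 1)) _ _) => hm.mono hsub) _ _ h2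

theorem gen_main (hS : IsMinGenSet S T) {N : ℕ} {A B : Subgroup G}
    (h : Relation.ReflTransGen (Move (sliceW S N)) A B) :
    wt A = N → A ≠ B →
    (A, B) ∈ PhiN T N ∨ ∃ s ∈ S, wt s.1 = N ∧ Dre T N (A, B) s := by
  induction h using Relation.ReflTransGen.head_induction_on with
  | refl => intro _ hne; exact absurd rfl hne
  | @head a c hm h1 ih =>
    intro hA hne
    by_cases hac : a = c
    · rw [hac]
      exact hac ▸ ih (hac ▸ hA) (hac ▸ hne)
    · obtain ⟨p, hp, g, hEq, hB2⟩ := hm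
      have haC : a ≤ c := hEq ▸ inf_le_right
      have hwc : N + 1 ≤ wt c := by
        have := wt_lt haC hac
        omega
      have hCB : (c, B) ∈ PhiN T N := rtg_high_phi hS h1 hwc
      have hale : a ≤ conjSub g p.1 := hEq ▸ inf_le_left
      rcases Nat.lt_or_ge N (wt p.1) with hgt | hle2
      · left
        have hpT : p ∈ sliceW T (N + 1) := ⟨hS.1 hp.1, hp.2.1, hgt⟩
        have hmove : Move (sliceW T (N + 1)) a c := ⟨p, hpT, g, hEq, hB2⟩
        exact (isTS_TGen _).2.2.1 a c B (Relation.ReflTransGen.single hmove) hCB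
      · right
        have hwp : wt p.1 = N := le_antisymm hle2 hp.2.2
        have haK : a = conjSub g p.1 := by
          refine eq_of_le_wt hale ?_
          rw [wt_conjSub, hwp, hA]
        exact ⟨p, hp.1, hwp, g, c, haK, haC, hB2, hCB⟩

theorem exists_match {R : Set (Subgroup G × Subgroup G)} (hT : IsTransferSystem T)
    (hS : IsMinGenSet S T) (hR : IsMinGenSet R T) {s : Subgroup G × Subgroup G}
    (hs : s ∈ S) :
    ∃ r ∈ R, wt r.1 = wt s.1 ∧ Dre T (wt s.1) s r := by
  have h1 : Relation.ReflTransGen (Move R) s.1 s.2 := by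
    have : s ∈ TGen R := by rw [TGen_S_eq hT hR]; exact hS.1 hs
    exact this
  have h2 := rtg_slice (N := wt s.1) h1 le_rfl
  have h3 := gen_main (T := T) hR h2 rfl (hS.2.1 s hs)
  rcases h3 with hPhi | ⟨r, hr, hwr, hdre⟩
  · exact absurd hPhi (s_not_in_Phi hT hS hs rfl)
  · exact ⟨r, hr, hwr, hdre⟩

end MinGen

/-- Between two minimal generating sets of the same transfer system there is a bijection
preserving the total prime exponent of the source subgroup. -/
theorem minimal_generating_sets_filtered_bijection {G : Type*} [Group G] [Finite G]
    (T S R : Set (Subgroup G × Subgroup G)) (hT : IsTransferSystem T)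
    (hS : IsMinGenSet S T) (hR : IsMinGenSet R T) :
    ∃ f : S → R, Function.Bijective f ∧
      ∀ a : S, bigOmega (Nat.card (↥((f a).1.1))) = bigOmega (Nat.card (↥(a.1.1))) := by
  classical
  -- at each level n there is an injection from the level-n part of S to that of R
  have inj_level : ∀ (S' R' : Set (Subgroup G × Subgroup G)), IsMinGenSet S' T →
      IsMinGenSet R' T → ∀ n : ℕ,
      ∃ f : {a : ↥S' // wt (a : Subgroup G × Subgroup G).1 = n} →
        {b : ↥R' // wt (b : Subgroup G × Subgroup G).1 = n}, Function.Injective f := by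
    intro S' R' hS' hR' n
    have h1 : ∀ a : {a : ↥S' // wt (a : Subgroup G × Subgroup G).1 = n},
        ∃ r, (r ∈ R' ∧ wt r.1 = n ∧ Dre T n (a : Subgroup G × Subgroup G) r) := by
      rintro ⟨⟨s, hs⟩, hn⟩
      obtain ⟨r, hr, h2, h3⟩ := exists_match hT hS' hR' hs
      rw [hn] at h2 h3
      exact ⟨r, hr, h2, h3⟩
    choose F hFR hFw hFd using h1
    refine ⟨fun a => ⟨⟨F a, hFR a⟩, hFw a⟩, ?_⟩
    intro a a' hEq
    have hFE : F a = F a' := congrArg (fun x => (x.1 : Subgroup G × Subgroup G)) hEq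
    -- find a common S'-element above the common image
    obtain ⟨s'', hs'', hws'', hd''⟩ := exists_match hT hR' hS' (hFR a)
    rw [hFw a] at hws'' hd''
    have hda : Dre T n (a : Subgroup G × Subgroup G) s'' := dre_trans (hFd a) hd''
    have hda' : Dre T n (a' : Subgroup G × Subgroup G) s'' := by
      rw [hFE] at hd''
      exact dre_trans (hFd a') hd''
    have hea : (a : Subgroup G × Subgroup G) = s'' := by
      have := dre_eq hT hS' a.1.2 hs''
      rw [a.2] at this
      exact this hda
    have hea' : (a' : Subgroup G × Subgroup G) = s'' := by
      have := dre_eq hT hS' a'.1.2 hs''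
      rw [a'.2] at this
      exact this hda'
    apply Subtype.ext
    apply Subtype.ext
    rw [hea, hea']
  -- hence equal cardinalities at each level and a fiberwise family of equivalences
  have card_eq : ∀ n : ℕ,
      Nonempty ({a : ↥S // wt (a : Subgroup G × Subgroup G).1 = n} ≃
        {b : ↥R // wt (b : Subgroup G × Subgroup G).1 = n}) := by
    intro n
    obtain ⟨f, hf⟩ := inj_level S R hS hR n
    obtain ⟨g, hg⟩ := inj_level R S hR hS n
    refine Finite.card_eq.mp (le_antisymm ?_ ?_)
    · exact Nat.card_le_card_of_injective f hf
    · exact Nat.card_le_card_of_injective g hg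
  have e : ∀ n : ℕ, {a : ↥S // wt (a : Subgroup G × Subgroup G).1 = n} ≃
      {b : ↥R // wt (b : Subgroup G × Subgroup G).1 = n} :=
    fun n => (card_eq n).some
  refine ⟨⇑(Equiv.ofFiberEquiv e), (Equiv.ofFiberEquiv e).bijective, ?_⟩
  intro a
  exact Equiv.ofFiberEquiv_map e a
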